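/- Let n be a positive integer and B = ((n+1)(n+2)/2)^{1/n}. Then J_n(0) := ∫_0^B uⁿ·√(u² − 2u^{n+2}/((n+1)(n+2))) du = (1/n)·((n+1)(n+2)/2)^{(n+2)/n}·Β(3/2, (n+2)/n), where Β denotes the Beta function. -/

import Mathlib

open intervalIntegral Real

theorem stmt_16 (n : ℕ) (hn : 1 ≤ n)
    (Beta : ℝ → ℝ → ℝ)
    (hBeta : ∀ p q : ℝ, 0 < p → 0 < q →
      Beta p q = ∫ x in (0 : ℝ)..1, x ^ (p - 1) * (1 - x) ^ (q - 1)) :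
    ∫ u in (0 : ℝ)..((((n : ℝ) + 1) * ((n : ℝ) + 2) / 2) ^ ((1 : ℝ) / n)),
        u ^ n * Real.sqrt (u ^ 2 - 2 * u ^ (n + 2) / (((n : ℝ) + 1) * ((n : ℝ) + 2))) =
      (1 / (n : ℝ)) * ((((n : ℝ) + 1) * ((n : ℝ) + 2) / 2) ^ (((n : ℝ) + 2) / n)) *
        Beta (3 / 2) (((n : ℝ) + 2) / (n : ℝ)) := by
  have hn0 : (n : ℝ) ≠ 0 := Nat.cast_ne_zero.mpr (by omega)
  have hnpos : (0:ℝ) < n := by positivity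
  set C : ℝ := ((n : ℝ) + 1) * ((n : ℝ) + 2) / 2 with hCdef
  have hC : (0:ℝ) < C := by positivity
  set B : ℝ := C ^ ((1:ℝ)/n) with hBdef
  have hBpos : (0:ℝ) < B := Real.rpow_pos_of_pos hC _
  -- the substitution map
  set φ : ℝ → ℝ := fun u => u ^ n / C with hφdef
  set φ' : ℝ → ℝ := fun u => (n : ℝ) * u ^ (n - 1) / C with hφ'def
  set g : ℝ → ℝ := fun x => (C / n) * ((C * x) ^ ((2:ℝ)/n) * Real.sqrt (1 - x)) with hgdef
  have hderiv : ∀ u ∈ Set.uIcc (0:ℝ) B, HasDerivAt φ (φ' u) u := by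
    intro u _
    simpa [hφdef, hφ'def] using (hasDerivAt_pow n u).div_const C
  have hφ'cont : ContinuousOn φ' (Set.uIcc (0:ℝ) B) :=
    (Continuous.div_const (by continuity) C).continuousOn
  have hgcont : Continuous g := by
    apply continuous_const.mul
    apply Continuous.mul
    · exact (Real.continuous_rpow_const (by positivity)).comp (continuous_const.mul continuous_id)
    · exact Real.continuous_sqrt.comp (continuous_const.sub continuous_id)
  -- rewrite integrand on [0, B]
  have hcongr : (∫ u in (0:ℝ)..B,
      u ^ n * Real.sqrt (u ^ 2 - 2 * u ^ (n + 2) / (((n : ℝ) + 1) * ((n : ℝ) + 2))))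
      = ∫ u in (0:ℝ)..B, φ' u • (g ∘ φ) u := by
    apply intervalIntegral.integral_congr
    intro u hu
    rw [Set.uIcc_of_le hBpos.le] at hu
    have hu0 : 0 ≤ u := hu.1
    show u ^ n * Real.sqrt (u ^ 2 - 2 * u ^ (n + 2) / (((n : ℝ) + 1) * ((n : ℝ) + 2)))
      = φ' u • (g ∘ φ) u
    simp only [Function.comp_apply]
    have key1 : 2 * u ^ (n + 2) / (((n : ℝ) + 1) * ((n : ℝ) + 2)) = u ^ 2 * (u ^ n / C) := by
      rw [hCdef]
      have : ((n:ℝ)+1) * ((n:ℝ)+2) ≠ 0 := by positivity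
      field_simp
      ring
    rw [key1]
    have key2 : u ^ 2 - u ^ 2 * (u ^ n / C) = u ^ 2 * (1 - u ^ n / C) := by ring
    rw [key2, Real.sqrt_mul (by positivity), Real.sqrt_sq hu0]
    simp only [hφdef, hφ'def, hgdef, smul_eq_mul]
    have key3 : C * (u ^ n / C) = u ^ n := by field_simp
    rw [key3]
    have key4 : (u ^ n : ℝ) ^ ((2:ℝ)/n) = u ^ 2 := by
      rw [← Real.rpow_natCast u n, ← Real.rpow_mul hu0]
      rw [show (n:ℝ) * (2/n) = 2 by field_simp]
      rw [show ((2:ℝ) = ((2:ℕ):ℝ)) by norm_num, Real.rpow_natCast]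
    rw [key4]
    have key6 : (n:ℝ) * u ^ (n-1) / C * (C / (n:ℝ) * (u ^ 2 * Real.sqrt (1 - u ^ n / C)))
        = u ^ n * (u * Real.sqrt (1 - u ^ n / C)) := by
      rw [show u ^ n = u ^ (n-1) * u from by rw [← pow_succ]; congr 1; omega]
      field_simp
    rw [key6]
  rw [hcongr, intervalIntegral.integral_comp_smul_deriv hderiv hφ'cont hgcont]
  have hφ0 : φ 0 = 0 := by simp [hφdef, zero_pow (by omega : n ≠ 0)]
  have hφB : φ B = 1 := by
    simp only [hφdef, hBdef]
    rw [← Real.rpow_natCast (C ^ ((1:ℝ)/n)) n, ← Real.rpow_mul hC.le]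
    rw [show (1:ℝ)/n * n = 1 by field_simp]
    rw [Real.rpow_one]
    field_simp
  rw [hφ0, hφB]
  -- compute RHS Beta
  have hq : (0:ℝ) < ((n:ℝ)+2)/n := by positivity
  rw [hBeta (3/2) (((n:ℝ)+2)/n) (by norm_num) hq]
  have hexp : ((n:ℝ)+2)/n - 1 = 2/n := by field_simp; ring
  rw [hexp]
  norm_num only
  -- reflect the Beta integral
  have hrefl : (∫ x in (0:ℝ)..1, x ^ ((1:ℝ)/2) * (1-x) ^ ((2:ℝ)/n))
      = ∫ x in (0:ℝ)..1, (1-x) ^ ((1:ℝ)/2) * x ^ ((2:ℝ)/n) := by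
    have := intervalIntegral.integral_comp_sub_left
      (fun y : ℝ => y ^ ((1:ℝ)/2) * (1-y) ^ ((2:ℝ)/n)) 1 (a := 0) (b := 1)
    simp only [sub_zero, sub_self] at this
    rw [← this]
    apply intervalIntegral.integral_congr
    intro x _
    simp only
    rw [show (1:ℝ) - (1 - x) = x by ring]
  -- compute LHS integral of g
  have hg_int : (∫ x in (0:ℝ)..1, g x)
      = (C/n) * (C ^ ((2:ℝ)/n) * ∫ x in (0:ℝ)..1, (1-x) ^ ((1:ℝ)/2) * x ^ ((2:ℝ)/n)) := by
    rw [hgdef]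
    rw [intervalIntegral.integral_const_mul]
    congr 1
    rw [← intervalIntegral.integral_const_mul]
    apply intervalIntegral.integral_congr
    intro x hx
    rw [Set.uIcc_of_le (by norm_num : (0:ℝ) ≤ 1)] at hx
    simp only
    rw [Real.mul_rpow hC.le hx.1, Real.sqrt_eq_rpow]
    ring
  rw [hg_int, hrefl]
  have hCpow : C ^ (((n:ℝ)+2)/n) = C * C ^ ((2:ℝ)/n) := by
    rw [show ((n:ℝ)+2)/n = 1 + 2/n by field_simp, Real.rpow_add hC, Real.rpow_one]
  rw [hCpow]
  -- match the x^(1/2) exponent: 3/2 - 1 = 1/2 handled by norm_num above? ensure forms align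
  have : (∫ x in (0:ℝ)..1, x ^ ((3:ℝ)/2 - 1) * (1-x) ^ ((2:ℝ)/n))
      = ∫ x in (0:ℝ)..1, x ^ ((1:ℝ)/2) * (1-x) ^ ((2:ℝ)/n) := by norm_num
  rw [this] at *
  ring
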